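/- Let h : {1,…,n} → {1,…,n} be a Hessenberg function and let w be a permutation of {1,…,n} such that for every j ∈ {1,…,n} with w(j) ≠ 1 one has w^{-1}(w(j)−1) ≤ h(j). Then f_{h(j),j}(w) = 0 in ℚ[t] for every j ∈ {1,…,n}. -/

import Mathlib

/-- A Hessenberg function `h : {1,…,n} → {1,…,n}`. -/
def IsHessenberg (n : ℕ) (h : ℕ → ℕ) : Prop :=
  (∀ i, 1 ≤ i → i ≤ n → i ≤ h i ∧ h i ≤ n) ∧
  (∀ i, 1 ≤ i → i + 1 ≤ n → h i ≤ h (i + 1))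

/-- The variable `x_k` (for `1 ≤ k ≤ n`) in `ℚ[x_1,…,x_n,t]`, realized as
`MvPolynomial (Fin (n+1)) ℚ` where the variable of index `0` is `t`. -/
noncomputable def xv (n k : ℕ) : MvPolynomial (Fin (n + 1)) ℚ :=
  if h : k ≤ n then MvPolynomial.X ⟨k, Nat.lt_succ_of_le h⟩ else 0

/-- The variable `t` in `ℚ[x_1,…,x_n,t]`. -/
noncomputable def tv (n : ℕ) : MvPolynomial (Fin (n + 1)) ℚ :=
  MvPolynomial.X 0

/-- `p_i := Σ_{k=1}^{i} (x_k − k·t)`, with `p_0 = 0`. -/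
noncomputable def pp (n i : ℕ) : MvPolynomial (Fin (n + 1)) ℚ :=
  ∑ k ∈ Finset.Icc 1 i, (xv n k - (k : MvPolynomial (Fin (n + 1)) ℚ) * tv n)

/-- The polynomials `f_{i,j}`: `f_{j,j} = p_j`, `f_{i,0} = 0`, and
`f_{i,j} = f_{i−1,j−1} + (x_j − x_i − t)·f_{i−1,j}` for `i > j ≥ 1`. -/
noncomputable def ff (n : ℕ) : ℕ → ℕ → MvPolynomial (Fin (n + 1)) ℚ
  | _, 0 => 0
  | 0, _ + 1 => 0
  | i + 1, j + 1 =>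
    if i + 1 = j + 1 then pp n (j + 1)
    else ff n i j + (xv n (j + 1) - xv n (i + 1) - tv n) * ff n i (j + 1)

/-- The `ℚ`-algebra homomorphism `ℚ[x_1,…,x_n,t] → ℚ[t]` sending `x_r ↦ w(r)·t` and
`t ↦ t`; applied to `f_{i,j}` it yields `f_{i,j}(w)`. -/
noncomputable def evf (n : ℕ) (w : ℕ → ℕ) : MvPolynomial (Fin (n + 1)) ℚ →ₐ[ℚ] Polynomial ℚ :=
  MvPolynomial.aeval fun v : Fin (n + 1) =>
    if (v : ℕ) = 0 then Polynomial.X else Polynomial.C ((w (v : ℕ) : ℚ)) * Polynomial.X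

/-- Let `h` be a Hessenberg function and `w` a permutation of `{1,…,n}` (modelled as
`w : Equiv.Perm ℕ` fixing every point outside `{1,…,n}`) such that for every
`j ∈ {1,…,n}` with `w(j) ≠ 1` one has `w⁻¹(w(j)−1) ≤ h(j)`.  Then
`f_{h(j),j}(w) = 0` in `ℚ[t]` for every `j ∈ {1,…,n}`. -/

noncomputable def uu (a : ℕ → ℚ) (S : Finset ℕ) (k : ℕ) : ℚ :=
  ∏ l ∈ S.erase k, (a k - a l - 1) / (a k - a l)

lemma sub_ne (a : ℕ → ℚ) (ha : ∀ k l : ℕ, k ≠ l → a k ≠ a l) (k l : ℕ) (hkl : k ≠ l) :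
    a k - a l ≠ 0 :=
  sub_ne_zero.mpr (ha k l hkl)

lemma uu_insert (a : ℕ → ℚ) (S : Finset ℕ) (c k : ℕ) (hc : c ∉ S) (hk : k ∈ S) :
    uu a (insert c S) k = uu a S k * ((a k - a c - 1) / (a k - a c)) := by
  have hkc : c ≠ k := fun h => hc (h ▸ hk)
  unfold uu
  rw [Finset.erase_insert_of_ne hkc,
    Finset.prod_insert (fun h => hc (Finset.mem_of_mem_erase h)), mul_comm]

lemma PF (a : ℕ → ℚ) (ha : ∀ k l : ℕ, k ≠ l → a k ≠ a l) (S : Finset ℕ) : ∀ b ∉ S,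
    ∏ l ∈ S, (a b - a l - 1) / (a b - a l) = 1 - ∑ k ∈ S, uu a S k / (a b - a k) := by
  classical
  induction S using Finset.induction_on with
  | empty => simp
  | @insert c S hc IH =>
      intro b hb
      have hbc : b ≠ c := fun h => hb (h ▸ Finset.mem_insert_self c S)
      have hbS : b ∉ S := fun h => hb (Finset.mem_insert_of_mem h)
      have hbc' : a b - a c ≠ 0 := sub_ne a ha b c hbc
      rw [Finset.prod_insert hc, Finset.sum_insert hc, IH b hbS]
      have huc : uu a (insert c S) c = 1 - ∑ k ∈ S, uu a S k / (a c - a k) := by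
        unfold uu
        rw [Finset.erase_insert hc]
        exact IH c hc
      rw [huc]
      have h2 : ∑ k ∈ S, uu a (insert c S) k / (a b - a k)
          = ((a b - a c - 1) / (a b - a c)) * (∑ k ∈ S, uu a S k / (a b - a k))
            + (1 / (a b - a c)) * ∑ k ∈ S, uu a S k / (a c - a k) := by
        rw [Finset.mul_sum, Finset.mul_sum, ← Finset.sum_add_distrib]
        refine Finset.sum_congr rfl fun k hk => ?_
        have hkc : k ≠ c := fun h => hc (h ▸ hk)
        rw [uu_insert a S c k hc hk]
        have h1 : a k - a c ≠ 0 := sub_ne a ha k c hkc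
        have h2 : a b - a k ≠ 0 := sub_ne a ha b k (fun h => hbS (h ▸ hk))
        have h3 : a c - a k ≠ 0 := sub_ne a ha c k (Ne.symm hkc)
        field_simp
        ring
      rw [h2]
      set A := ∑ k ∈ S, uu a S k / (a b - a k) with hA
      set B := ∑ k ∈ S, uu a S k / (a c - a k) with hB
      field_simp
      ring

lemma C1 (a : ℕ → ℚ) (ha : ∀ k l : ℕ, k ≠ l → a k ≠ a l) (S : Finset ℕ) :
    ∑ k ∈ S, uu a S k = S.card := by
  classical
  induction S using Finset.induction_on with
  | empty => simp
  | @insert c S hc IH =>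
      rw [Finset.sum_insert hc, Finset.card_insert_of_notMem hc]
      have huc : uu a (insert c S) c = 1 - ∑ k ∈ S, uu a S k / (a c - a k) := by
        unfold uu
        rw [Finset.erase_insert hc]
        exact PF a ha S c hc
      have h2 : ∑ k ∈ S, uu a (insert c S) k
          = (∑ k ∈ S, uu a S k) + ∑ k ∈ S, uu a S k / (a c - a k) := by
        rw [← Finset.sum_add_distrib]
        refine Finset.sum_congr rfl fun k hk => ?_
        have hkc : k ≠ c := fun h => hc (h ▸ hk)
        rw [uu_insert a S c k hc hk]
        have h1 : a k - a c ≠ 0 := sub_ne a ha k c hkc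
        have h3 : a c - a k ≠ 0 := sub_ne a ha c k (Ne.symm hkc)
        field_simp
        ring
      rw [huc, h2, IH]
      push_cast
      ring

lemma C2 (a : ℕ → ℚ) (ha : ∀ k l : ℕ, k ≠ l → a k ≠ a l) (S : Finset ℕ) :
    ∑ k ∈ S, (a k - 1) * uu a S k
      = (∑ k ∈ S, a k) - (S.card * (S.card + 1)) / 2 := by
  classical
  induction S using Finset.induction_on with
  | empty => simp
  | @insert c S hc IH =>
      rw [Finset.sum_insert hc, Finset.sum_insert hc, Finset.card_insert_of_notMem hc]
      have huc : uu a (insert c S) c = 1 - ∑ k ∈ S, uu a S k / (a c - a k) := by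
        unfold uu
        rw [Finset.erase_insert hc]
        exact PF a ha S c hc
      have h2 : ∑ k ∈ S, (a k - 1) * uu a (insert c S) k
          = (a c - 1) * (∑ k ∈ S, uu a S k / (a c - a k))
            + ((∑ k ∈ S, (a k - 1) * uu a S k) - ∑ k ∈ S, uu a S k) := by
        rw [Finset.mul_sum, ← Finset.sum_sub_distrib, ← Finset.sum_add_distrib]
        refine Finset.sum_congr rfl fun k hk => ?_
        have hkc : k ≠ c := fun h => hc (h ▸ hk)
        rw [uu_insert a S c k hc hk]
        have h1 : a k - a c ≠ 0 := sub_ne a ha k c hkc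
        have h3 : a c - a k ≠ 0 := sub_ne a ha c k (Ne.symm hkc)
        field_simp
        ring
      rw [huc, h2, IH, C1 a ha S]
      push_cast
      ring


noncomputable def gg (a : ℕ → ℚ) : ℕ → ℕ → ℚ
  | _, 0 => 0
  | 0, _ + 1 => 0
  | i + 1, j + 1 =>
    if i + 1 = j + 1 then ∑ k ∈ Finset.Icc 1 (j + 1), (a k - k)
    else gg a i j + (a (j + 1) - a (i + 1) - 1) * gg a i (j + 1)

lemma Icc_insert_left (x y : ℕ) (h : x ≤ y) :
    Finset.Icc x y = insert x (Finset.Icc (x + 1) y) := by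
  ext m
  simp only [Finset.mem_Icc, Finset.mem_insert]
  omega

lemma Icc_insert_right (x y : ℕ) (h : x ≤ y) :
    Finset.Icc x y = insert y (Finset.Icc x (y - 1)) := by
  ext m
  simp only [Finset.mem_Icc, Finset.mem_insert]
  omega

lemma gauss (j : ℕ) : (∑ k ∈ Finset.Icc 1 j, (k : ℚ)) = (j * (j + 1)) / 2 := by
  induction j with
  | zero => simp
  | succ j IH =>
      rw [Icc_insert_right 1 (j + 1) (by omega), Finset.sum_insert (by simp)]
      simp only [Nat.add_sub_cancel]
      rw [IH]
      push_cast
      ring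

/-- closed form for `gg`. -/
lemma gg_closed (a : ℕ → ℚ) (ha : ∀ k l : ℕ, k ≠ l → a k ≠ a l) :
    ∀ i j : ℕ, j ≤ i →
      gg a i j = ∑ k ∈ Finset.Icc 1 j,
        (a k - 1) * uu a (Finset.Icc 1 j) k
          * ∏ l ∈ Finset.Icc (j + 1) i, (a k - a l - 1) := by
  intro i
  induction i with
  | zero =>
      intro j hj
      interval_cases j
      simp [gg]
  | succ i IH =>
      intro j hj
      match j with
      | 0 => simp [gg]
      | j + 1 =>
        rw [gg]
        by_cases hdiag : i + 1 = j + 1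
        · rw [if_pos hdiag]
          obtain rfl : i = j := by omega
          have he : Finset.Icc (i + 1 + 1) (i + 1) = ∅ := by
            rw [Finset.Icc_eq_empty_iff]; omega
          rw [he]
          simp only [Finset.prod_empty, mul_one]
          rw [C2 a ha, Finset.sum_sub_distrib]
          have hcard : (Finset.Icc 1 (i + 1)).card = i + 1 := by simp
          rw [hcard, gauss (i + 1)]
        · rw [if_neg hdiag]
          have hji : j + 1 ≤ i := by omega
          rw [IH j (by omega), IH (j + 1) hji]
          -- split target sum: Icc 1 (j+1) = insert (j+1) (Icc 1 j)
          have hsplit : Finset.Icc 1 (j + 1) = insert (j + 1) (Finset.Icc 1 j) := by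
            rw [Icc_insert_right 1 (j + 1) (by omega)]
            simp
          have hnotmem : (j + 1) ∉ Finset.Icc 1 j := by simp
          -- prod splits
          have hprod1 : ∀ k, (∏ l ∈ Finset.Icc (j + 2) (i + 1), (a k - a l - 1))
              = (a k - a (i + 1) - 1) * ∏ l ∈ Finset.Icc (j + 2) i, (a k - a l - 1) := by
            intro k
            rw [Icc_insert_right (j + 2) (i + 1) (by omega), Finset.prod_insert (by simp)]
            simp
          have hprod2 : ∀ k, (∏ l ∈ Finset.Icc (j + 1) i, (a k - a l - 1))
              = (a k - a (j + 1) - 1) * ∏ l ∈ Finset.Icc (j + 2) i, (a k - a l - 1) := by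
            intro k
            rw [Icc_insert_left (j + 1) i hji, Finset.prod_insert (by simp)]
          rw [hsplit, Finset.sum_insert hnotmem, Finset.sum_insert hnotmem, mul_add,
            Finset.mul_sum]
          have hkey : ∀ k ∈ Finset.Icc 1 j,
              (a k - 1) * uu a (insert (j + 1) (Finset.Icc 1 j)) k
                  * ∏ l ∈ Finset.Icc (j + 1 + 1) (i + 1), (a k - a l - 1)
              = (a k - 1) * uu a (Finset.Icc 1 j) k * ∏ l ∈ Finset.Icc (j + 1) i, (a k - a l - 1)
                + (a (j + 1) - a (i + 1) - 1) *
                  ((a k - 1) * uu a (insert (j + 1) (Finset.Icc 1 j)) k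
                    * ∏ l ∈ Finset.Icc (j + 1 + 1) i, (a k - a l - 1)) := by
            intro k hk
            have hkj : k ≠ j + 1 := by
              simp only [Finset.mem_Icc] at hk; omega
            rw [uu_insert a _ _ _ hnotmem hk]
            have h1 : a k - a (j + 1) ≠ 0 := sub_ne a ha k (j + 1) hkj
            show _ * ∏ l ∈ Finset.Icc (j + 2) (i + 1), _ = _ + _ * (_ * ∏ l ∈ Finset.Icc (j + 2) i, _)
            rw [hprod1 k, hprod2 k]
            field_simp
            ring
          conv_rhs => rw [Finset.sum_congr rfl hkey]
          rw [Finset.sum_add_distrib]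
          -- now handle the k = j+1 diagonal term
          have hdiagterm :
              (a (j + 1) - 1) * uu a (insert (j + 1) (Finset.Icc 1 j)) (j + 1)
                  * ∏ l ∈ Finset.Icc (j + 1 + 1) (i + 1), (a (j + 1) - a l - 1)
              = (a (j + 1) - a (i + 1) - 1) *
                  ((a (j + 1) - 1) * uu a (insert (j + 1) (Finset.Icc 1 j)) (j + 1)
                    * ∏ l ∈ Finset.Icc (j + 1 + 1) i, (a (j + 1) - a l - 1)) := by
            show _ * ∏ l ∈ Finset.Icc (j + 2) (i + 1), _ = _
            rw [hprod1 (j + 1)]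
            ring
          rw [hdiagterm]
          ring


lemma evf_tv (n : ℕ) (w : ℕ → ℕ) : evf n w (tv n) = Polynomial.X := by
  rw [evf, tv, MvPolynomial.aeval_X]
  simp

lemma evf_xv (n : ℕ) (w : ℕ → ℕ) (k : ℕ) (h1 : 1 ≤ k) (h2 : k ≤ n) :
    evf n w (xv n k) = Polynomial.C ((w k : ℚ)) * Polynomial.X := by
  rw [evf, xv, dif_pos h2, MvPolynomial.aeval_X]
  have : ((⟨k, Nat.lt_succ_of_le h2⟩ : Fin (n + 1)) : ℕ) = k := rfl
  rw [this, if_neg (by omega)]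

lemma evf_pp (n : ℕ) (w : ℕ → ℕ) (i : ℕ) (hi : i ≤ n) :
    evf n w (pp n i)
      = Polynomial.C (∑ k ∈ Finset.Icc 1 i, ((w k : ℚ) - k)) * Polynomial.X := by
  rw [pp, map_sum]
  have hterm : ∀ k ∈ Finset.Icc 1 i,
      evf n w (xv n k - (k : MvPolynomial (Fin (n + 1)) ℚ) * tv n)
        = Polynomial.C ((w k : ℚ) - k) * Polynomial.X := by
    intro k hk
    simp only [Finset.mem_Icc] at hk
    rw [map_sub, map_mul, evf_xv n w k hk.1 (le_trans hk.2 hi), evf_tv, map_sub, sub_mul,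
      map_natCast (evf n w) k, ← Polynomial.C_eq_natCast]
  rw [Finset.sum_congr rfl hterm, ← Finset.sum_mul, ← map_sum]

lemma evf_ff (n : ℕ) (w : ℕ → ℕ) :
    ∀ i, i ≤ n → ∀ j, j ≤ i →
      evf n w (ff n i j)
        = Polynomial.C (gg (fun k => (w k : ℚ)) i j) * Polynomial.X ^ (i - j + 1) := by
  intro i
  induction i with
  | zero =>
      intro _ j hj
      interval_cases j
      simp [ff, gg]
  | succ i IH =>
      intro hin j hj
      match j with
      | 0 => simp [ff, gg]
      | j + 1 =>
        rw [ff, gg]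
        by_cases hdiag : i + 1 = j + 1
        · rw [if_pos hdiag, if_pos hdiag]
          obtain rfl : i = j := by omega
          rw [evf_pp n w (i + 1) hin]
          simp
        · rw [if_neg hdiag, if_neg hdiag]
          have hji : j + 1 ≤ i := by omega
          have hin : i ≤ n := by omega
          rw [map_add, map_mul, map_sub, map_sub, evf_tv,
            evf_xv n w (j + 1) (by omega) (by omega),
            evf_xv n w (i + 1) (by omega) (by omega),
            IH hin j (by omega), IH hin (j + 1) hji]
          rw [show i - j = i - (j + 1) + 1 from by omega,
            show i + 1 - (j + 1) = i - (j + 1) + 1 from by omega]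
          generalize i - (j + 1) = m
          rw [map_add, map_mul, map_sub, map_sub, Polynomial.C_1]
          ring


section Final

variable (n : ℕ) (h : ℕ → ℕ) (hh : IsHessenberg n h)
  (w : Equiv.Perm ℕ) (hw : ∀ r, r ∉ Finset.Icc 1 n → w r = r)

/-- h is monotone on [1,n] -/
lemma h_mono (hh : IsHessenberg n h) : ∀ k j, 1 ≤ k → k ≤ j → j ≤ n → h k ≤ h j := by
  intro k j hk hkj hjn
  induction j with
  | zero => omega
  | succ j IH =>
      rcases Nat.lt_or_ge k (j + 1) with hlt | hge
      · have hj1 : 1 ≤ j := by omega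
        exact le_trans (IH (by omega) (by omega)) (hh.2 j hj1 hjn)
      · have : k = j + 1 := by omega
        subst this; exact le_rfl

lemma w_mem (hw : ∀ r, r ∉ Finset.Icc 1 n → w r = r) :
    ∀ k, k ∈ Finset.Icc 1 n → (w k) ∈ Finset.Icc 1 n := by
  intro k hk
  by_contra hcon
  have := hw (w k) hcon
  have : w (w k) = w k := this
  have hk2 : (w k) = k := w.injective this
  rw [hk2] at hcon
  exact hcon hk

lemma wsymm_mem (hw : ∀ r, r ∉ Finset.Icc 1 n → w r = r) :
    ∀ k, k ∈ Finset.Icc 1 n → (w.symm k) ∈ Finset.Icc 1 n := by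
  intro k hk
  by_contra hcon
  have h1 : w (w.symm k) = w.symm k := hw _ hcon
  rw [Equiv.apply_symm_apply] at h1
  rw [← h1] at hcon
  exact hcon hk

theorem gg_vanish (hh : IsHessenberg n h)
    (hw : ∀ r, r ∉ Finset.Icc 1 n → w r = r)
    (hfix : ∀ j, 1 ≤ j → j ≤ n → w j ≠ 1 → w.symm (w j - 1) ≤ h j) :
    ∀ j, 1 ≤ j → j ≤ n → gg (fun k => ((w k : ℚ))) (h j) j = 0 := by
  intro j hj1 hjn
  set a : ℕ → ℚ := fun k => ((w k : ℚ)) with haa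
  have ha : ∀ k l : ℕ, k ≠ l → a k ≠ a l := by
    intro k l hkl hcon
    exact hkl (w.injective (Nat.cast_injective hcon))
  have hjh : j ≤ h j := (hh.1 j hj1 hjn).1
  have hhn : h j ≤ n := (hh.1 j hj1 hjn).2
  rw [gg_closed a ha (h j) j hjh]
  apply Finset.sum_eq_zero
  intro k hk
  simp only [Finset.mem_Icc] at hk
  have hkn : k ≤ n := le_trans hk.2 hjn
  have hwk : w k ∈ Finset.Icc 1 n := w_mem n w hw k (by simp [Finset.mem_Icc]; omega)
  simp only [Finset.mem_Icc] at hwk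
  by_cases h1 : w k = 1
  · have : a k - 1 = 0 := by simp [haa, h1]
    rw [this, zero_mul, zero_mul]
  · -- m := w.symm (w k - 1)
    set m := w.symm (w k - 1) with hm
    have hwk2 : 2 ≤ w k := by omega
    have hwm : w m = w k - 1 := Equiv.apply_symm_apply w _
    have hmIcc : m ∈ Finset.Icc 1 n := by
      apply wsymm_mem n w hw
      simp only [Finset.mem_Icc]; omega
    simp only [Finset.mem_Icc] at hmIcc
    have hmhj : m ≤ h j := le_trans (hfix k hk.1 hkn h1)
      (h_mono n h hh k j hk.1 hk.2 hjn)
    have hmk : m ≠ k := by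
      intro hcon
      rw [hcon] at hwm
      omega
    have hfac : a k - a m - 1 = 0 := by
      simp only [haa, hwm]
      have : ((w k - 1 : ℕ) : ℚ) = (w k : ℚ) - 1 := by
        push_cast [Nat.cast_sub (by omega : 1 ≤ w k)]; ring
      rw [this]; ring
    rcases Nat.lt_or_ge j m with hgt | hle
    · -- m ∈ Icc (j+1) (h j): second product vanishes
      have hmem : m ∈ Finset.Icc (j + 1) (h j) := by
        simp only [Finset.mem_Icc]; omega
      rw [Finset.prod_eq_zero hmem hfac, mul_zero]
    · -- m ∈ (Icc 1 j).erase k : uu vanishes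
      have hmem : m ∈ (Finset.Icc 1 j).erase k := by
        simp only [Finset.mem_erase, Finset.mem_Icc]
        exact ⟨hmk, hmIcc.1, hle⟩
      have : uu a (Finset.Icc 1 j) k = 0 := by
        apply Finset.prod_eq_zero hmem
        rw [hfac, zero_div]
      rw [this, mul_zero, zero_mul]

end Final

theorem stmt9 (n : ℕ) (h : ℕ → ℕ) (hh : IsHessenberg n h)
    (w : Equiv.Perm ℕ) (hw : ∀ r, r ∉ Finset.Icc 1 n → w r = r)
    (hfix : ∀ j, 1 ≤ j → j ≤ n → w j ≠ 1 → w.symm (w j - 1) ≤ h j) :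
    ∀ j, 1 ≤ j → j ≤ n → evf n ⇑w (ff n (h j) j) = 0 := by
  intro j hj1 hjn
  have hjh : j ≤ h j := (hh.1 j hj1 hjn).1
  have hhn : h j ≤ n := (hh.1 j hj1 hjn).2
  rw [evf_ff n (⇑w) (h j) hhn j hjh,
    gg_vanish n h w hh hw hfix j hj1 hjn]
  simp
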